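/- Tropical Appell–Humbert uniqueness: with notation as above, two pairs (E, l) and (E', l') of a symmetric bilinear form with E(Λ × N) ⊆ ℤ and a linear form l ∈ Hom(Λ, ℝ) give cohomologous factors of automorphy a_{E,l} and a_{E',l'} (i.e., their difference is of the form (λ, x) ↦ m(λ) for some m : N → ℤ linear, extended ℝ-linearly) if and only if E = E' and (l − l')_ℝ maps N into ℤ. -/
import Mathlib


/-- Tropical Appell–Humbert uniqueness: two pairs `(E, l)` and `(E', l')`
give cohomologous factors of automorphy `a_{E,l}` and `a_{E',l'}` (i.e., their difference
is `(λ, x) ↦ m(λ)` for an ℝ-linear `m` taking integer values on `N`) if and only if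
`E = E'` and `(l − l')` maps `N` into `ℤ`.  Here `l, l'` are given as the ℝ-linear
extensions of the linear forms on `Λ`. -/
theorem tropical_Appell_Humbert_uniqueness
    (V : Type*) [AddCommGroup V] [Module ℝ V] [FiniteDimensional ℝ V]
    (N Λ : AddSubgroup V)
    (hN : Submodule.span ℝ (N : Set V) = ⊤)
    (hΛ : Submodule.span ℝ (Λ : Set V) = ⊤)
    (E E' : V →ₗ[ℝ] V →ₗ[ℝ] ℝ)
    (hsymm : ∀ x y : V, E x y = E y x)
    (hsymm' : ∀ x y : V, E' x y = E' y x)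
    (hint : ∀ lam ∈ Λ, ∀ n ∈ N, ∃ k : ℤ, E lam n = (k : ℝ))
    (hint' : ∀ lam ∈ Λ, ∀ n ∈ N, ∃ k : ℤ, E' lam n = (k : ℝ))
    (l l' : V →ₗ[ℝ] ℝ) :
    (∃ m : V →ₗ[ℝ] ℝ, (∀ n ∈ N, ∃ k : ℤ, m n = (k : ℝ)) ∧
        ∀ lam ∈ Λ, ∀ x : V,
          (l lam - E lam x - E lam lam / 2)
            - (l' lam - E' lam x - E' lam lam / 2) = m lam)
      ↔ (E = E' ∧ ∀ n ∈ N, ∃ k : ℤ, l n - l' n = (k : ℝ)) := by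
  constructor
  · rintro ⟨m, hmN, hm⟩
    have hEE' : E = E' := by
      apply LinearMap.ext_on hΛ
      intro lam hlam
      apply LinearMap.ext
      intro x
      have h1 := hm lam hlam x
      have h2 := hm lam hlam 0
      simp only [map_zero] at h2
      linarith
    subst hEE'
    have hll' : l - l' = m := by
      apply LinearMap.ext_on hΛ
      intro lam hlam
      have := hm lam hlam 0
      simp only [map_zero, LinearMap.sub_apply]
      linarith
    refine ⟨rfl, fun n hn => ?_⟩
    obtain ⟨k, hk⟩ := hmN n hn
    exact ⟨k, by rw [← hk, ← hll']; simp⟩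
  · rintro ⟨rfl, hll'⟩
    refine ⟨l - l', fun n hn => ?_, fun lam hlam x => by simp⟩
    obtain ⟨k, hk⟩ := hll' n hn
    exact ⟨k, by simpa using hk⟩
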